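/- The quantity η* = -log(γ + (1/(c_H - 1)) e^{-c_L Ψ^{-1}(γ)}) is a strictly decreasing function of γ ∈ (0,1), where Ψ^{-1} is the inverse of the strictly decreasing function Ψ(x) = -(c_L/(1-c_L))e^{-x} + (1/(1-c_L))e^{-c_L x} on [0,∞); moreover η* → +∞ as γ → 0⁺ and η* → -log(c_H/(c_H - 1)) as γ → 1⁻. -/

import Mathlib

open Real Set Filter

set_option maxHeartbeats 1000000

theorem eta_star_monotone_and_limits (cL cH : ℝ) (hcL0 : 0 < cL) (hcL1 : cL < 1)
    (hcH : 1 < cH)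
    (Ψ Ψinv : ℝ → ℝ)
    (hΨ : ∀ x, Ψ x = -(cL / (1 - cL)) * exp (-x) + (1 / (1 - cL)) * exp (-cL * x))
    (hinv_left : ∀ x ∈ Ici (0 : ℝ), Ψinv (Ψ x) = x)
    (hinv_right : ∀ γ ∈ Ioc (0 : ℝ) 1, Ψinv γ ∈ Ici (0 : ℝ) ∧ Ψ (Ψinv γ) = γ)
    (η : ℝ → ℝ)
    (hη : ∀ γ, η γ = -Real.log (γ + (1 / (cH - 1)) * exp (-cL * Ψinv γ))) :
    StrictAntiOn η (Ioo 0 1) ∧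
    Tendsto η (nhdsWithin 0 (Ioi 0)) atTop ∧
    Tendsto η (nhdsWithin 1 (Iio 1)) (nhds (-Real.log (cH / (cH - 1)))) := by
  have hc1 : 0 < 1 - cL := by linarith
  have hcH1 : 0 < cH - 1 := by linarith
  have hΨfun : Ψ = fun x => -(cL / (1 - cL)) * exp (-x) + (1 / (1 - cL)) * exp (-cL * x) :=
    funext hΨ
  -- Ψ is positive on [0, ∞)
  have hΨpos : ∀ x ∈ Ici (0 : ℝ), 0 < Ψ x := by
    intro x hx
    rw [hΨ]
    have h1 : exp (-x) ≤ exp (-cL * x) := exp_le_exp.2 (by nlinarith [mem_Ici.1 hx])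
    have h2 : 0 < exp (-x) := exp_pos _
    have heq : -(cL / (1 - cL)) * exp (-x) + (1 / (1 - cL)) * exp (-cL * x)
        = (exp (-cL * x) - cL * exp (-x)) / (1 - cL) := by ring
    rw [heq]
    apply div_pos _ hc1
    nlinarith
  -- derivative of Ψ
  have hd : ∀ x : ℝ, HasDerivAt Ψ ((cL / (1 - cL)) * (exp (-x) - exp (-cL * x))) x := by
    intro x
    have h1 : HasDerivAt (fun x : ℝ => exp (-x)) (exp (-x) * (-1)) x :=
      ((hasDerivAt_id x).neg.congr_deriv (by simp)).exp
    have h2 : HasDerivAt (fun x : ℝ => exp (-cL * x)) (exp (-cL * x) * (-cL)) x := by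
      have := ((hasDerivAt_id x).const_mul (-cL)).exp
      simpa using this
    have h3 := (h1.const_mul (-(cL / (1 - cL)))).add (h2.const_mul (1 / (1 - cL)))
    rw [hΨfun]
    refine h3.congr_deriv ?_
    ring
  have hΨcont : Continuous Ψ := by
    rw [hΨfun]; continuity
  -- Ψ strictly decreasing on [0, ∞)
  have hΨanti : StrictAntiOn Ψ (Ici 0) := by
    apply strictAntiOn_of_deriv_neg (convex_Ici 0) hΨcont.continuousOn
    intro x hx
    rw [interior_Ici] at hx
    rw [(hd x).deriv]
    have hx0 : (0 : ℝ) < x := hx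
    have : exp (-x) < exp (-cL * x) := exp_lt_exp.2 (by nlinarith)
    have hpos : 0 < cL / (1 - cL) := div_pos hcL0 hc1
    nlinarith
  -- Ψinv is strictly decreasing on (0,1]
  have hinv_anti : ∀ a ∈ Ioc (0 : ℝ) 1, ∀ b ∈ Ioc (0 : ℝ) 1, a < b → Ψinv b < Ψinv a := by
    intro a ha b hb hab
    by_contra h
    push_neg at h
    have hba : Ψ (Ψinv b) ≤ Ψ (Ψinv a) :=
      hΨanti.antitoneOn (hinv_right a ha).1 (hinv_right b hb).1 h
    rw [(hinv_right a ha).2, (hinv_right b hb).2] at hba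
    linarith
  set g : ℝ → ℝ := fun γ => γ + (1 / (cH - 1)) * exp (-cL * Ψinv γ) with hg
  have hηfun : η = fun γ => -Real.log (g γ) := funext hη
  have hgpos : ∀ γ ∈ Ioc (0 : ℝ) 1, 0 < g γ := by
    intro γ hγ
    have := exp_pos (-cL * Ψinv γ)
    have h1 : 0 < 1 / (cH - 1) := by positivity
    have := hγ.1
    simp only [hg]
    nlinarith
  constructor
  · -- strict antitonicity
    intro a ha b hb hab
    have ha' : a ∈ Ioc (0 : ℝ) 1 := ⟨ha.1, le_of_lt ha.2⟩
    have hb' : b ∈ Ioc (0 : ℝ) 1 := ⟨hb.1, le_of_lt hb.2⟩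
    have hinv : Ψinv b < Ψinv a := hinv_anti a ha' b hb' hab
    have hexp : exp (-cL * Ψinv a) < exp (-cL * Ψinv b) :=
      exp_lt_exp.2 (by nlinarith)
    have hglt : g a < g b := by
      simp only [hg]
      have h1 : 0 < 1 / (cH - 1) := by positivity
      nlinarith
    rw [hηfun]
    simp only
    have := Real.log_lt_log (hgpos a ha') hglt
    linarith
  constructor
  · -- limit at 0⁺
    have hmem : Ioo (0 : ℝ) 1 ∈ nhdsWithin (0 : ℝ) (Ioi 0) :=
      Ioo_mem_nhdsGT_of_mem ⟨le_refl 0, one_pos⟩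
    -- Ψinv → ∞
    have hinv_top : Tendsto Ψinv (nhdsWithin 0 (Ioi 0)) atTop := by
      rw [tendsto_atTop]
      intro M
      set M' := max M 0 with hM'
      have hM'0 : M' ∈ Ici (0 : ℝ) := mem_Ici.2 (le_max_right _ _)
      have hΨM' : 0 < Ψ M' := hΨpos M' hM'0
      have hsmall : Iio (Ψ M') ∈ nhdsWithin (0 : ℝ) (Ioi 0) :=
        mem_nhdsWithin_of_mem_nhds (Iio_mem_nhds hΨM')
      filter_upwards [hmem, hsmall] with γ hγ hγ'
      have hγ1 : γ ∈ Ioc (0 : ℝ) 1 := ⟨hγ.1, le_of_lt hγ.2⟩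
      by_contra h
      push_neg at h
      have hle : Ψinv γ ≤ M' := le_of_lt (lt_of_lt_of_le h (le_max_left _ _))
      have := hΨanti.antitoneOn (hinv_right γ hγ1).1 hM'0 hle
      rw [(hinv_right γ hγ1).2] at this
      exact absurd this (not_le.2 hγ')
    -- g → 0 within (0, ∞)
    have hgz : Tendsto g (nhdsWithin 0 (Ioi 0)) (nhdsWithin 0 (Ioi 0)) := by
      apply tendsto_nhdsWithin_of_tendsto_nhds_of_eventually_within
      · have hbot : Tendsto (fun γ => -cL * Ψinv γ) (nhdsWithin 0 (Ioi 0)) atBot := by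
          have := tendsto_neg_atTop_atBot.comp (Tendsto.const_mul_atTop hcL0 hinv_top)
          exact this.congr fun x => (neg_mul cL (Ψinv x)).symm
        have h1 : Tendsto (fun γ => exp (-cL * Ψinv γ)) (nhdsWithin 0 (Ioi 0)) (nhds 0) :=
          Real.tendsto_exp_atBot.comp hbot
        have h2 : Tendsto (fun γ : ℝ => γ) (nhdsWithin 0 (Ioi 0)) (nhds 0) :=
          tendsto_id.mono_left nhdsWithin_le_nhds
        have h3 := h2.add (h1.const_mul (1 / (cH - 1)))
        rw [show (0 : ℝ) + 1 / (cH - 1) * 0 = 0 by ring] at h3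
        exact h3
      · filter_upwards [hmem] with γ hγ
        exact hgpos γ ⟨hγ.1, le_of_lt hγ.2⟩
    rw [hηfun]
    have := (Real.tendsto_log_nhdsGT_zero.comp hgz)
    exact tendsto_neg_atBot_atTop.comp this
  · -- limit at 1⁻
    have hmem : Ioo (0 : ℝ) 1 ∈ nhdsWithin (1 : ℝ) (Iio 1) :=
      Ioo_mem_nhdsLT_of_mem ⟨one_pos, le_refl 1⟩
    -- Ψinv → 0
    have hinv_zero : Tendsto Ψinv (nhdsWithin 1 (Iio 1)) (nhds 0) := by
      rw [tendsto_order]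
      constructor
      · intro a ha
        filter_upwards [hmem] with γ hγ
        have := (hinv_right γ ⟨hγ.1, le_of_lt hγ.2⟩).1
        exact lt_of_lt_of_le ha this
      · intro b hb
        have hΨb : Ψ b < 1 := by
          have h1 : Ψ b < Ψ 0 := hΨanti (mem_Ici.2 (le_refl 0)) (mem_Ici.2 (le_of_lt hb)) hb
          have h0 : Ψ 0 = 1 := by rw [hΨ]; simp; field_simp; ring
          linarith
        have hΨbpos : 0 < Ψ b := hΨpos b (le_of_lt hb)
        have hmem2 : Ioo (Ψ b) 1 ∈ nhdsWithin (1 : ℝ) (Iio 1) :=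
          Ioo_mem_nhdsLT_of_mem ⟨hΨb, le_refl 1⟩
        filter_upwards [hmem2] with γ hγ
        have hγ1 : γ ∈ Ioc (0 : ℝ) 1 := ⟨lt_trans hΨbpos hγ.1, le_of_lt hγ.2⟩
        by_contra h
        push_neg at h
        have := hΨanti.antitoneOn (le_of_lt hb) (hinv_right γ hγ1).1 h
        rw [(hinv_right γ hγ1).2] at this
        exact absurd this (not_le.2 hγ.1)
    -- g → cH/(cH-1)
    have hglim : Tendsto g (nhdsWithin 1 (Iio 1)) (nhds (cH / (cH - 1))) := by
      have hbase : Tendsto (fun γ => -cL * Ψinv γ) (nhdsWithin 1 (Iio 1)) (nhds (-cL * 0)) :=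
        hinv_zero.const_mul (-cL)
      rw [mul_zero] at hbase
      have h1 : Tendsto (fun γ => exp (-cL * Ψinv γ)) (nhdsWithin 1 (Iio 1)) (nhds (exp 0)) :=
        (Real.continuous_exp.tendsto 0).comp hbase
      rw [Real.exp_zero] at h1
      have h2 : Tendsto (fun γ : ℝ => γ) (nhdsWithin 1 (Iio 1)) (nhds 1) :=
        tendsto_id.mono_left nhdsWithin_le_nhds
      have h3 := h2.add (h1.const_mul (1 / (cH - 1)))
      rw [show (1 : ℝ) + 1 / (cH - 1) * 1 = cH / (cH - 1) by field_simp; ring] at h3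
      exact h3
    rw [hηfun]
    have hpos : (0 : ℝ) < cH / (cH - 1) := by positivity
    have hlog : Tendsto (fun γ => Real.log (g γ)) (nhdsWithin 1 (Iio 1))
        (nhds (Real.log (cH / (cH - 1)))) :=
      ((Real.continuousAt_log (ne_of_gt hpos)).tendsto).comp hglim
    exact hlog.neg
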